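/- Let R = ℚ(q^{1/2}) (or any field of characteristic zero in which q is transcendental over ℚ) and consider η_k^n as a polynomial in r via its binomial expansion η_k^n(r) = Σ_{j=0}^n C(n,j) q^{2(2j-n)+k} γ_{2j-n+k}(r), where γ_m(r) is the Chebyshev-like polynomial with γ_0 = 0, γ_1 = 1, γ_{m+1} = r γ_m - γ_{m-1} and γ_{-m} = -γ_m. Then for k > 0, η_k^n is a polynomial in r of degree n + k - 1 with leading coefficient q^{2n+k}; for k = 0 and n ≥ 1, it has degree n - 1 with leading coefficient q^{2n} - q^{-2n}; and for k < 0, it has degree n + |k| - 1 with leading coefficient -q^{-(2n+|k|)}. -/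

import Mathlib

open Polynomial Finset

section aux
variable {F : Type*} [Field F] (γ : ℤ → Polynomial F)
  (hγ0 : γ 0 = 0) (hγ1 : γ 1 = 1)
  (hγrec : ∀ m : ℤ, γ (m + 1) = Polynomial.X * γ m - γ (m - 1))

include hγ0 hγ1 hγrec

theorem aux13_monic : ∀ t : ℕ, (γ ((t : ℤ) + 1)).Monic ∧ (γ ((t : ℤ) + 1)).natDegree = t := by
  intro t
  induction t using Nat.strong_induction_on with
  | _ t ih =>
    match t with
    | 0 => simpa [hγ1] using ⟨monic_one, rfl⟩
    | 1 =>
        have h := hγrec 1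
        norm_num at h ⊢
        rw [hγ0, hγ1] at h
        simp only [mul_one, sub_zero] at h
        rw [h]
        exact ⟨monic_X, natDegree_X⟩
    | (t+2) =>
        have h1 := ih (t+1) (by omega)
        have h0 := ih t (by omega)
        have h := hγrec ((t : ℤ) + 2)
        have e1 : ((t : ℤ) + 2) + 1 = ((t+2 : ℕ) : ℤ) + 1 := by push_cast; ring
        have e2 : ((t : ℤ) + 2) - 1 = ((t : ℤ) + 1) := by ring
        have e3 : ((t : ℤ) + 2) = ((t+1 : ℕ) : ℤ) + 1 := by push_cast; ring
        rw [e1, e2, e3] at h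
        have hm : (Polynomial.X * γ (((t+1 : ℕ) : ℤ) + 1)).Monic := monic_X.mul h1.1
        have hdm : (Polynomial.X * γ (((t+1 : ℕ) : ℤ) + 1)).natDegree = t + 2 := by
          rw [natDegree_mul X_ne_zero h1.1.ne_zero, natDegree_X, h1.2]; omega
        have hlt : (γ ((t : ℤ) + 1)).degree < (Polynomial.X * γ (((t+1 : ℕ) : ℤ) + 1)).degree := by
          rw [degree_eq_natDegree hm.ne_zero, hdm]
          calc (γ ((t : ℤ) + 1)).degree ≤ (t : WithBot ℕ) := by
                have hd := degree_le_natDegree (p := γ ((t:ℤ)+1)); rwa [h0.2] at hd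
            _ < ((t+2 : ℕ) : WithBot ℕ) := by exact_mod_cast (by omega : t < t + 2)
        refine ⟨h ▸ hm.sub_of_left hlt, ?_⟩
        rw [h, natDegree_sub_eq_left_of_natDegree_lt, hdm]
        rw [hdm, h0.2]; omega

theorem aux13_neg : ∀ t : ℕ, γ (-(t : ℤ)) = - γ (t : ℤ) := by
  intro t
  induction t using Nat.strong_induction_on with
  | _ t ih =>
    match t with
    | 0 => simp [hγ0]
    | 1 =>
        have h := hγrec 0
        norm_num at h
        rw [hγ0, hγ1] at h
        have h2 : γ (-1) = -1 := by linear_combination h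
        simpa [hγ1] using h2
    | (t+2) =>
        have h1 := ih (t+1) (by omega)
        have h0 := ih t (by omega)
        have h := hγrec (-(t : ℤ) - 1)
        have e1 : (-(t : ℤ) - 1) + 1 = -(t : ℤ) := by ring
        have e3 : (-(t : ℤ) - 1) - 1 = -((t+2 : ℕ) : ℤ) := by push_cast; ring
        have e2 : (-(t : ℤ) - 1) = -((t+1 : ℕ) : ℤ) := by push_cast; ring
        rw [e1, e3, e2] at h
        have hr := hγrec ((t : ℤ) + 1)
        have e4 : ((t : ℤ) + 1) + 1 = ((t+2 : ℕ) : ℤ) := by push_cast; ring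
        have e5 : ((t : ℤ) + 1) - 1 = ((t : ℕ) : ℤ) := by norm_num
        have e6 : ((t : ℤ) + 1) = ((t+1 : ℕ) : ℤ) := by push_cast; ring
        rw [e4, e5, e6] at hr
        rw [hr]
        rw [h0, h1] at h
        linear_combination h

theorem aux13_deg : ∀ z : ℤ, (γ z).degree < (z.natAbs : WithBot ℕ) := by
  intro z
  rcases lt_trichotomy z 0 with hz | hz | hz
  · obtain ⟨t, rfl⟩ : ∃ t : ℕ, z = -((t : ℤ) + 1) := ⟨(z.natAbs - 1), by omega⟩
    have hmn := aux13_monic γ hγ0 hγ1 hγrec t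
    have hn : -((t : ℤ) + 1) = -(((t+1 : ℕ)) : ℤ) := by push_cast; ring
    rw [hn, aux13_neg γ hγ0 hγ1 hγrec (t+1), degree_neg]
    have e : (((t+1:ℕ)) : ℤ) = (t : ℤ) + 1 := by push_cast; ring
    rw [e, degree_eq_natDegree hmn.1.ne_zero, hmn.2]
    have e2 : (-((t:ℤ)+1)).natAbs = t + 1 := by omega
    rw [e2]
    exact_mod_cast (by omega : t < t + 1)
  · subst hz
    rw [hγ0, degree_zero]
    simpa using WithBot.bot_lt_coe 0
  · obtain ⟨t, rfl⟩ : ∃ t : ℕ, z = (t : ℤ) + 1 := ⟨(z.natAbs - 1), by omega⟩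
    have hmn := aux13_monic γ hγ0 hγ1 hγrec t
    rw [degree_eq_natDegree hmn.1.ne_zero, hmn.2]
    have e2 : ((t:ℤ)+1).natAbs = t + 1 := by omega
    rw [e2]
    exact_mod_cast (by omega : t < t + 1)




theorem aux13_term (q : F) (n : ℕ) (e z : ℤ) (D : ℕ) (hz : z.natAbs ≤ D) (j : ℕ) :
    ((n.choose j : Polynomial F) * C (q ^ e) * γ z).degree < (D : WithBot ℕ) := by
  have h1 : ((n.choose j : Polynomial F) * C (q ^ e) * γ z) = C ((n.choose j : F) * q ^ e) * γ z := by
    rw [C_mul, C_eq_natCast]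
  rw [h1]
  calc (C ((n.choose j : F) * q ^ e) * γ z).degree
      ≤ (C ((n.choose j : F) * q ^ e)).degree + (γ z).degree := degree_mul_le _ _
    _ ≤ 0 + (γ z).degree := add_le_add degree_C_le le_rfl
    _ = (γ z).degree := zero_add _
    _ < (z.natAbs : WithBot ℕ) := aux13_deg γ hγ0 hγ1 hγrec z
    _ ≤ (D : WithBot ℕ) := by exact_mod_cast hz

theorem aux13_Cmul (c : F) (hc : c ≠ 0) (d : ℕ) :
    (C c * γ ((d : ℤ) + 1)).degree = (d : WithBot ℕ) ∧
      (C c * γ ((d : ℤ) + 1)).leadingCoeff = c := by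
  obtain ⟨hm, hd⟩ := aux13_monic γ hγ0 hγ1 hγrec d
  constructor
  · rw [degree_C_mul hc, degree_eq_natDegree hm.ne_zero, hd]
  · rw [leadingCoeff_mul, leadingCoeff_C, hm.leadingCoeff, mul_one]

end aux

theorem aux13_dominant {F : Type*} [Field F] (S T : Polynomial F) (d : ℕ) (c : F)
    (hS : S.degree < (d : WithBot ℕ)) (hTd : T.degree = (d : WithBot ℕ))
    (hTl : T.leadingCoeff = c) :
    (S + T).natDegree = d ∧ (S + T).leadingCoeff = c := by
  have hlt : S.degree < T.degree := hTd ▸ hS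
  exact ⟨by rw [natDegree_eq_of_degree_eq (degree_add_eq_right_of_degree_lt hlt)];
            exact natDegree_eq_of_degree_eq_some hTd,
         by rw [leadingCoeff_add_of_degree_lt hlt, hTl]⟩

theorem stmt_13 (F : Type*) [Field F] [CharZero F] (q : F)
    (hq : Transcendental ℚ q)
    (γ : ℤ → Polynomial F)
    (hγ0 : γ 0 = 0) (hγ1 : γ 1 = 1)
    (hγrec : ∀ m : ℤ, γ (m + 1) = Polynomial.X * γ m - γ (m - 1))
    (η : ℤ → ℕ → Polynomial F)
    (hη : ∀ (k : ℤ) (n : ℕ), η k n = ∑ j ∈ Finset.range (n + 1),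
      (n.choose j : Polynomial F) * Polynomial.C (q ^ (2 * (2 * (j : ℤ) - n) + k)) *
        γ (2 * (j : ℤ) - n + k)) :
    (∀ (n : ℕ) (m : ℕ), 0 < m →
      (η (m : ℤ) n).natDegree = n + m - 1 ∧ (η (m : ℤ) n).leadingCoeff = q ^ (2 * n + m)) ∧
    (∀ n : ℕ, 1 ≤ n →
      (η 0 n).natDegree = n - 1 ∧ (η 0 n).leadingCoeff = q ^ (2 * n) - (q ^ (2 * n))⁻¹) ∧
    (∀ (n : ℕ) (m : ℕ), 0 < m →
      (η (-(m : ℤ)) n).natDegree = n + m - 1 ∧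
        (η (-(m : ℤ)) n).leadingCoeff = -(q ^ (2 * n + m))⁻¹) := by
  have hq0 : q ≠ 0 := fun h => hq (h ▸ isAlgebraic_zero)
  refine ⟨?_, ?_, ?_⟩
  · -- k = m > 0
    intro n m hm
    rw [hη, Finset.sum_range_succ]
    have hT : (n.choose n : Polynomial F) * C (q ^ (2 * (2 * (n:ℤ) - n) + m)) *
        γ (2 * (n:ℤ) - n + m) = C (q ^ ((2 * n + m : ℕ) : ℤ)) * γ (((n + m - 1 : ℕ) : ℤ) + 1) := by
      rw [show (2 * (n:ℤ) - n + m) = ((n + m - 1 : ℕ) : ℤ) + 1 by push_cast [hm]; omega,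
        show (2 * (2 * (n:ℤ) - n) + m) = ((2 * n + m : ℕ) : ℤ) by push_cast; ring,
        Nat.choose_self, Nat.cast_one, one_mul]
    rw [hT]
    obtain ⟨hTd, hTl⟩ := aux13_Cmul γ hγ0 hγ1 hγrec (q ^ ((2 * n + m : ℕ) : ℤ))
      (zpow_ne_zero _ hq0) (n + m - 1)
    refine aux13_dominant _ _ _ _ ?_ hTd (by rw [hTl, zpow_natCast])
    refine lt_of_le_of_lt (degree_sum_le _ _) ?_
    rw [Finset.sup_lt_iff (WithBot.bot_lt_coe _)]
    intro j hj
    simp only [Finset.mem_range] at hj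
    exact aux13_term γ hγ0 hγ1 hγrec q n _ _ _ (by omega) j
  · -- k = 0
    intro n hn
    obtain ⟨n', rfl⟩ : ∃ n', n = n' + 1 := ⟨n - 1, by omega⟩
    rw [hη, Finset.sum_range_succ, Finset.sum_range_succ', add_assoc]
    have hc : q ^ (2 * (n' + 1)) - (q ^ (2 * (n' + 1)))⁻¹ ≠ 0 := by
      intro h
      have hqp : q ^ (2 * (n' + 1)) ≠ 0 := pow_ne_zero _ hq0
      have h4 : q ^ (4 * (n' + 1)) = 1 := by
        have h2 := sub_eq_zero.mp h
        have h3 : q ^ (2 * (n' + 1)) * q ^ (2 * (n' + 1)) = 1 := by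
          nth_rewrite 2 [h2]
          exact mul_inv_cancel₀ hqp
        rw [show 4 * (n' + 1) = 2 * (n' + 1) + 2 * (n' + 1) by ring, pow_add, h3]
      exact hq ⟨Polynomial.X ^ (4 * (n' + 1)) - 1,
        by simpa using X_pow_sub_C_ne_zero (by omega : 0 < 4 * (n' + 1)) (1 : ℚ),
        by simp [h4]⟩
    push_cast
    have hT : (((n' + 1).choose 0 : Polynomial F)) * C (q ^ (2 * ((0:ℤ) - ((n':ℤ) + 1)) + 0)) *
          γ ((0:ℤ) - ((n':ℤ) + 1) + 0) +
        (((n' + 1).choose (n' + 1) : Polynomial F)) *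
          C (q ^ (2 * (2 * ((n':ℤ) + 1) - ((n':ℤ) + 1)) + 0)) *
          γ (2 * ((n':ℤ) + 1) - ((n':ℤ) + 1) + 0) =
        C (q ^ (2 * (n' + 1)) - (q ^ (2 * (n' + 1)))⁻¹) * γ ((n' : ℤ) + 1) := by
      rw [show ((0:ℤ) - ((n':ℤ) + 1) + 0) = -(((n' + 1 : ℕ)) : ℤ) by push_cast; ring,
        aux13_neg γ hγ0 hγ1 hγrec (n' + 1),
        show (((n' + 1 : ℕ)) : ℤ) = (n' : ℤ) + 1 by push_cast; ring,
        show (2 * ((n':ℤ) + 1) - ((n':ℤ) + 1) + 0) = (n' : ℤ) + 1 by ring,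
        show (2 * ((0:ℤ) - ((n':ℤ) + 1)) + 0) = -((2 * (n' + 1) : ℕ) : ℤ) by push_cast; ring,
        show (2 * (2 * ((n':ℤ) + 1) - ((n':ℤ) + 1)) + 0) = ((2 * (n' + 1) : ℕ) : ℤ) by
          push_cast; ring,
        zpow_neg, zpow_natCast, Nat.choose_self, Nat.choose_zero_right,
        Nat.cast_one, one_mul, one_mul, C_sub]
      ring
    rw [hT]
    obtain ⟨hTd, hTl⟩ := aux13_Cmul γ hγ0 hγ1 hγrec
      (q ^ (2 * (n' + 1)) - (q ^ (2 * (n' + 1)))⁻¹) hc n'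
    refine aux13_dominant _ _ _ _ ?_ hTd hTl
    refine lt_of_le_of_lt (degree_sum_le _ _) ?_
    rw [Finset.sup_lt_iff (WithBot.bot_lt_coe _)]
    intro j hj
    simp only [Finset.mem_range] at hj
    exact aux13_term γ hγ0 hγ1 hγrec q (n' + 1) _ _ _ (by omega) (j + 1)
  · -- k = -m < 0
    intro n m hm
    rw [hη, Finset.sum_range_succ']
    have hT : (n.choose 0 : Polynomial F) * C (q ^ (2 * (2 * ((0:ℕ):ℤ) - n) + -(m:ℤ))) *
        γ (2 * ((0:ℕ):ℤ) - n + -(m:ℤ)) =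
        C (-(q ^ ((2 * n + m : ℕ) : ℤ))⁻¹) * γ (((n + m - 1 : ℕ) : ℤ) + 1) := by
      rw [show (2 * ((0:ℕ):ℤ) - n + -(m:ℤ)) = -(((n + m : ℕ)) : ℤ) by push_cast; ring,
        aux13_neg γ hγ0 hγ1 hγrec (n + m),
        show (((n + m : ℕ)) : ℤ) = ((n + m - 1 : ℕ) : ℤ) + 1 by push_cast [hm]; omega,
        show (2 * (2 * ((0:ℕ):ℤ) - n) + -(m:ℤ)) = -((2 * n + m : ℕ) : ℤ) by push_cast; ring,
        zpow_neg, Nat.choose_zero_right, Nat.cast_one, one_mul, map_neg]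
      ring
    rw [hT]
    obtain ⟨hTd, hTl⟩ := aux13_Cmul γ hγ0 hγ1 hγrec (-(q ^ ((2 * n + m : ℕ) : ℤ))⁻¹)
      (by simp [zpow_ne_zero, hq0]) (n + m - 1)
    refine aux13_dominant _ _ _ _ ?_ hTd (by rw [hTl, zpow_natCast])
    refine lt_of_le_of_lt (degree_sum_le _ _) ?_
    rw [Finset.sup_lt_iff (WithBot.bot_lt_coe _)]
    intro j hj
    simp only [Finset.mem_range] at hj
    exact aux13_term γ hγ0 hγ1 hγrec q n _ _ _ (by push_cast; omega) (j + 1)
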